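/- Let λ_0 < λ_1 < ... < λ_g be reals, L > 2∑_{i=1}^g (λ_i - λ_0), p_i = L - 2∑_{j=1}^g min(λ_i - λ_0, λ_j - λ_0) for 1 ≤ i ≤ g, and p_0 = L. Define the g×g matrix K by K_{ii} = p_{i-1} + p_i + 2(λ_i - λ_{i-1}), K_{i,i+1} = K_{i+1,i} = -p_i, and K_{ij} = 0 for |i-j| ≥ 2. Then 0 < p_g < p_{g-1} < ... < p_1, and the row sums of K are positive: ∑_{j=1}^g K_{ij} > 0 for every i. -/

import Mathlib

open Finset

/-- The tridiagonal period matrix of the tropical spectral curve, in 0-based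
indexing: row `a` corresponds to the 1-based index `a+1`. -/
noncomputable def periodK (g : ℕ) (lam p : ℕ → ℝ) : Matrix (Fin g) (Fin g) ℝ :=
  fun a b =>
    if a = b then p a.val + p (a.val + 1) + 2 * (lam (a.val + 1) - lam a.val)
    else if a.val + 1 = b.val then -p (a.val + 1)
    else if b.val + 1 = a.val then -p (b.val + 1)
    else 0

theorem p_decreasing_and_row_sums_pos (g : ℕ) (hg : 0 < g) (L : ℝ) (lam p : ℕ → ℝ)
    (hlam : ∀ i, i < g → lam i < lam (i + 1))
    (hL : 2 * ∑ i ∈ Finset.Icc 1 g, (lam i - lam 0) < L)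
    (hp0 : p 0 = L)
    (hp : ∀ i, 1 ≤ i → i ≤ g →
      p i = L - 2 * ∑ j ∈ Finset.Icc 1 g, min (lam i - lam 0) (lam j - lam 0)) :
    (0 < p g) ∧ (∀ i, 1 ≤ i → i < g → p (i + 1) < p i) ∧
      (∀ a : Fin g, 0 < ∑ b, periodK g lam p a b) := by
  -- monotonicity of lam on [0, g]
  have mono : ∀ j, j ≤ g → ∀ i, i ≤ j → lam i ≤ lam j := by
    intro j
    induction j with
    | zero => intro _ i hi; interval_cases i; rfl
    | succ n ih =>
      intro hjg i hi
      rcases Nat.eq_or_lt_of_le hi with h | h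
      · rw [h]
      · exact le_trans (ih (le_trans (Nat.le_succ n) hjg) i (Nat.lt_succ_iff.mp h))
          (le_of_lt (hlam n (Nat.lt_of_succ_le hjg)))
  have hL0 : 0 < L := by
    have hpos : 0 < ∑ i ∈ Finset.Icc 1 g, (lam i - lam 0) := by
      apply Finset.sum_pos
      · intro i hi
        rw [Finset.mem_Icc] at hi
        have : lam 0 < lam i := lt_of_lt_of_le (hlam 0 hg)
          (mono i hi.2 1 hi.1)
        linarith
      · exact ⟨1, Finset.mem_Icc.mpr ⟨le_rfl, hg⟩⟩
    linarith
  have hpg : 0 < p g := by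
    rw [hp g hg le_rfl]
    have heq : ∑ j ∈ Finset.Icc 1 g, min (lam g - lam 0) (lam j - lam 0)
        = ∑ j ∈ Finset.Icc 1 g, (lam j - lam 0) := by
      apply Finset.sum_congr rfl
      intro j hj
      rw [Finset.mem_Icc] at hj
      exact min_eq_right (by linarith [mono g le_rfl j hj.2])
    rw [heq]; linarith
  have hdec : ∀ i, 1 ≤ i → i < g → p (i + 1) < p i := by
    intro i h1 h2
    rw [hp i h1 (le_of_lt h2), hp (i + 1) (le_trans h1 (Nat.le_succ i)) h2]
    have hsum : ∑ j ∈ Finset.Icc 1 g, min (lam i - lam 0) (lam j - lam 0)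
        < ∑ j ∈ Finset.Icc 1 g, min (lam (i + 1) - lam 0) (lam j - lam 0) := by
      apply Finset.sum_lt_sum
      · intro j hj
        exact min_le_min (by linarith [hlam i h2]) le_rfl
      · refine ⟨i + 1, Finset.mem_Icc.mpr ⟨by omega, h2⟩, ?_⟩
        have h3 : lam i < lam (i + 1) := hlam i h2
        rw [min_eq_left (by linarith), min_self]
        linarith
    linarith
  refine ⟨hpg, hdec, ?_⟩
  intro a
  have hsplit : ∀ b : Fin g, periodK g lam p a b =
      (if b = a then p a.val + p (a.val + 1) + 2 * (lam (a.val + 1) - lam a.val) else 0)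
    + ((if a.val + 1 = b.val then -p (a.val + 1) else 0)
    + (if b.val + 1 = a.val then -p (b.val + 1) else 0)) := by
    intro b
    unfold periodK
    simp only [Fin.ext_iff]
    split_ifs <;> first | ring1 | (exfalso; omega)
  rw [Finset.sum_congr rfl (fun b _ => hsplit b), Finset.sum_add_distrib,
    Finset.sum_add_distrib]
  have hS1 : ∑ b : Fin g, (if b = a then
      p a.val + p (a.val + 1) + 2 * (lam (a.val + 1) - lam a.val) else 0)
      = p a.val + p (a.val + 1) + 2 * (lam (a.val + 1) - lam a.val) := by
    simp
  have hS2 : ∑ b : Fin g, (if a.val + 1 = b.val then -p (a.val + 1) else 0)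
      = if a.val + 1 < g then -p (a.val + 1) else 0 := by
    by_cases h : a.val + 1 < g
    · rw [if_pos h]
      rw [Finset.sum_eq_single (⟨a.val + 1, h⟩ : Fin g)]
      · simp
      · intro b _ hb
        rw [if_neg]
        intro hc
        exact hb (Fin.ext hc.symm)
      · simp
    · rw [if_neg h]
      apply Finset.sum_eq_zero
      intro b _
      rw [if_neg]
      have := b.isLt
      omega
  have hS3 : ∑ b : Fin g, (if b.val + 1 = a.val then -p (b.val + 1) else 0)
      = if 0 < a.val then -p a.val else 0 := by
    by_cases h : 0 < a.val
    · rw [if_pos h]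
      have hlt : a.val - 1 < g := by have := a.isLt; omega
      rw [Finset.sum_eq_single (⟨a.val - 1, hlt⟩ : Fin g)]
      · have hv : ((⟨a.val - 1, hlt⟩ : Fin g) : ℕ) = a.val - 1 := rfl
        rw [hv]
        rw [if_pos (show a.val - 1 + 1 = a.val by omega),
          show a.val - 1 + 1 = a.val by omega]
      · intro b _ hb
        rw [if_neg]
        intro hc
        apply hb
        apply Fin.ext
        have hv : ((⟨a.val - 1, hlt⟩ : Fin g) : ℕ) = a.val - 1 := rfl
        rw [hv]
        omega
      · simp
    · rw [if_neg h]
      apply Finset.sum_eq_zero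
      intro b _
      rw [if_neg]
      omega
  rw [hS1, hS2, hS3]
  have hΔ : lam a.val < lam (a.val + 1) := hlam a.val a.isLt
  by_cases h1 : a.val + 1 < g <;> by_cases h0 : 0 < a.val
  · rw [if_pos h1, if_pos h0]; linarith
  · rw [if_pos h1, if_neg h0]
    have ha0 : a.val = 0 := by omega
    rw [ha0] at hΔ ⊢
    rw [hp0]
    linarith
  · rw [if_neg h1, if_pos h0]
    have hag : a.val + 1 = g := by have := a.isLt; omega
    rw [hag] at hΔ ⊢
    linarith
  · rw [if_neg h1, if_neg h0]
    have ha0 : a.val = 0 := by omega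
    have hag : a.val + 1 = g := by have := a.isLt; omega
    rw [ha0] at hag hΔ ⊢
    rw [hag] at hΔ
    rw [hp0, hag]
    linarith
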